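/- In the abstract pressure setting, if t ≤ t_c then P(t) = -t·λ_M, and if t ≥ t_f then P(t) = -t·λ_m. -/
import Mathlib


open Set

/-- In the abstract pressure setting: if `t ≤ t_c` (i.e. `t` is a lower bound of
`{s : P s > -s·λ_M}`) then `P t = -t·λ_M`, and if `t ≥ t_f` (i.e. `t` is an upper
bound of `{s : P s > -s·λ_m}`) then `P t = -t·λ_m`. -/
theorem pressure_affine_outside_freezing_points
    {M : Type*} [Nonempty M] (h lam : M → ℝ)
    (hh0 : ∀ μ, 0 ≤ h μ) (hhbdd : BddAbove (range h))
    (hlbdd : BddAbove (range lam)) (hlbdd' : BddBelow (range lam)) :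
    (∀ t : ℝ,
      t ∈ lowerBounds {s : ℝ |
        sSup (range fun μ => h μ - s * lam μ) > -s * sSup (range lam)} →
      sSup (range fun μ => h μ - t * lam μ) = -t * sSup (range lam))
    ∧ (∀ t : ℝ,
      t ∈ upperBounds {s : ℝ |
        sSup (range fun μ => h μ - s * lam μ) > -s * sInf (range lam)} →
      sSup (range fun μ => h μ - t * lam μ) = -t * sInf (range lam)) := by
  obtain ⟨A, hA⟩ := hhbdd
  obtain ⟨B, hB⟩ := hlbdd
  obtain ⟨b, hb⟩ := hlbdd'
  set C : ℝ := max |b| |B| with hCdef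
  have hC0 : 0 ≤ C := le_trans (abs_nonneg b) (le_max_left _ _)
  have hlamC : ∀ μ, |lam μ| ≤ C := by
    intro μ
    have h1 : b ≤ lam μ := hb ⟨μ, rfl⟩
    have h2 : lam μ ≤ B := hB ⟨μ, rfl⟩
    have h3 : -|b| ≤ b := neg_abs_le b
    have h4 : B ≤ |B| := le_abs_self B
    have h5 : |b| ≤ C := le_max_left _ _
    have h6 : |B| ≤ C := le_max_right _ _
    rw [abs_le]
    constructor <;> linarith
  have hne : ∀ t : ℝ, (range fun μ => h μ - t * lam μ).Nonempty :=
    fun t => range_nonempty _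
  have hbdd : ∀ t : ℝ, BddAbove (range fun μ => h μ - t * lam μ) := by
    intro t
    refine ⟨A + |t| * C, ?_⟩
    rintro x ⟨μ, rfl⟩
    have h1 : h μ ≤ A := hA ⟨μ, rfl⟩
    have h2 : |t * lam μ| ≤ |t| * C := by
      rw [abs_mul]
      exact mul_le_mul_of_nonneg_left (hlamC μ) (abs_nonneg t)
    have h3 : -(t * lam μ) ≤ |t * lam μ| := neg_le_abs _
    simp only []
    linarith
  -- Lipschitz-type bound
  have hlip : ∀ s t : ℝ, sSup (range fun μ => h μ - t * lam μ) ≤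
      sSup (range fun μ => h μ - s * lam μ) + |s - t| * C := by
    intro s t
    apply csSup_le (hne t)
    rintro x ⟨μ, rfl⟩
    dsimp only
    have h1 : h μ - s * lam μ ≤ sSup (range fun μ => h μ - s * lam μ) :=
      le_csSup (hbdd s) ⟨μ, rfl⟩
    have h2 : |(s - t) * lam μ| ≤ |s - t| * C := by
      rw [abs_mul]
      exact mul_le_mul_of_nonneg_left (hlamC μ) (abs_nonneg _)
    have h3 : (s - t) * lam μ ≤ |(s - t) * lam μ| := le_abs_self _
    have h4 : h μ - t * lam μ = (h μ - s * lam μ) + (s - t) * lam μ := by ring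
    linarith
  -- lower bound by the sup line
  have hgeM : ∀ t : ℝ, -t * sSup (range lam) ≤
      sSup (range fun μ => h μ - t * lam μ) := by
    intro t
    rcases le_or_gt 0 t with ht | ht
    · obtain ⟨μ⟩ := ‹Nonempty M›
      have h1 : lam μ ≤ sSup (range lam) := le_csSup ⟨B, hB⟩ ⟨μ, rfl⟩
      have h2 : h μ - t * lam μ ≤ sSup (range fun μ => h μ - t * lam μ) :=
        le_csSup (hbdd t) ⟨μ, rfl⟩
      nlinarith [hh0 μ]
    · apply le_of_forall_pos_le_add
      intro ε hε
      have hε' : 0 < ε / (-t) := div_pos hε (by linarith)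
      obtain ⟨x, ⟨μ, rfl⟩, hx⟩ :=
        exists_lt_of_lt_csSup (range_nonempty lam)
          (show sSup (range lam) - ε / (-t) < sSup (range lam) by linarith)
      have h2 : h μ - t * lam μ ≤ sSup (range fun μ => h μ - t * lam μ) :=
        le_csSup (hbdd t) ⟨μ, rfl⟩
      have hmul : (-t) * (ε / (-t)) = ε := mul_div_cancel₀ ε (by linarith)
      nlinarith [hh0 μ]
  -- lower bound by the inf line
  have hgem : ∀ t : ℝ, -t * sInf (range lam) ≤
      sSup (range fun μ => h μ - t * lam μ) := by
    intro t
    rcases le_or_gt t 0 with ht | ht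
    · obtain ⟨μ⟩ := ‹Nonempty M›
      have h1 : sInf (range lam) ≤ lam μ := csInf_le ⟨b, hb⟩ ⟨μ, rfl⟩
      have h2 : h μ - t * lam μ ≤ sSup (range fun μ => h μ - t * lam μ) :=
        le_csSup (hbdd t) ⟨μ, rfl⟩
      nlinarith [hh0 μ]
    · apply le_of_forall_pos_le_add
      intro ε hε
      have hε' : 0 < ε / t := div_pos hε ht
      obtain ⟨x, ⟨μ, rfl⟩, hx⟩ :=
        exists_lt_of_csInf_lt (range_nonempty lam)
          (show sInf (range lam) < sInf (range lam) + ε / t by linarith)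
      have h2 : h μ - t * lam μ ≤ sSup (range fun μ => h μ - t * lam μ) :=
        le_csSup (hbdd t) ⟨μ, rfl⟩
      have hmul : t * (ε / t) = ε := mul_div_cancel₀ ε (by linarith)
      nlinarith [hh0 μ]
  constructor
  · intro t ht
    refine le_antisymm ?_ (hgeM t)
    by_contra hgt
    push_neg at hgt
    set L : ℝ := sSup (range lam) with hLdef
    set ε : ℝ := sSup (range fun μ => h μ - t * lam μ) + t * L with hεdef
    have hε : 0 < ε := by simp only [hεdef]; linarith
    set δ : ℝ := ε / (C + |L| + 1) with hδdef
    have hden : 0 < C + |L| + 1 := by positivity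
    have hδ : 0 < δ := div_pos hε hden
    have hδε : δ * (C + |L| + 1) = ε := div_mul_cancel₀ ε (ne_of_gt hden)
    have habs : |t - δ - t| = δ := by
      rw [show t - δ - t = -δ by ring, abs_neg, abs_of_pos hδ]
    have hl := hlip (t - δ) t
    rw [habs] at hl
    have hL : L ≤ |L| := le_abs_self L
    have hmem : (t - δ) ∈ {s : ℝ |
        sSup (range fun μ => h μ - s * lam μ) > -s * sSup (range lam)} := by
      show sSup (range fun μ => h μ - (t - δ) * lam μ) > -(t - δ) * L
      nlinarith
    have := ht hmem
    linarith
  · intro t ht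
    refine le_antisymm ?_ (hgem t)
    by_contra hgt
    push_neg at hgt
    set L : ℝ := sInf (range lam) with hLdef
    set ε : ℝ := sSup (range fun μ => h μ - t * lam μ) + t * L with hεdef
    have hε : 0 < ε := by simp only [hεdef]; linarith
    set δ : ℝ := ε / (C + |L| + 1) with hδdef
    have hden : 0 < C + |L| + 1 := by positivity
    have hδ : 0 < δ := div_pos hε hden
    have hδε : δ * (C + |L| + 1) = ε := div_mul_cancel₀ ε (ne_of_gt hden)
    have habs : |t + δ - t| = δ := by
      rw [show t + δ - t = δ by ring, abs_of_pos hδ]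
    have hl := hlip (t + δ) t
    rw [habs] at hl
    have hL : -|L| ≤ L := neg_abs_le L
    have hmem : (t + δ) ∈ {s : ℝ |
        sSup (range fun μ => h μ - s * lam μ) > -s * sInf (range lam)} := by
      show sSup (range fun μ => h μ - (t + δ) * lam μ) > -(t + δ) * L
      nlinarith
    have := ht hmem
    linarith
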